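/- arXiv:2308.15204 — 4 statements merged into one kernel-verified Lean document; each statement's English description precedes it below -/
import Mathlib

section
/- Let ℓ : [0,T] → ℝ^d be of bounded variation and let (S, t̂, ẑ, ℓ̂) with S > 0, t̂ : [0,S] → ℝ Lipschitz, ẑ : [0,S] → ℝ^d Lipschitz and ℓ̂ : [0,S] → ℝ^d of bounded variation be a normalized p-parametrized BV solution associated with ℓ, i.e. it satisfies conditions (2.1)–(2.4) and the compatibility condition (2.5). Then ℓ̂(s) = ℓ(t̂(s)) for almost every s in the set M where t̂ is strictly increasing; in particular, (S, t̂, ẑ, ℓ̂) is a relaxed solution associated with ℓ. (Lemma 3.2) -/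
open MeasureTheory Set Filter
open scoped RealInnerProductSpace Topology NNReal

noncomputable section

abbrev Euc (d : ℕ) := EuclideanSpace ℝ (Fin d)

variable {d : ℕ}

/-- The convex subdifferential `∂R(0)` of a positively `1`-homogeneous `R` at `0`. -/
def subdiff0 (R : Euc d → ℝ) : Set (Euc d) := {w | ∀ v, ⟪w, v⟫ ≤ R v}

/-- Euclidean distance to `∂R(0)`. -/
def distR (R : Euc d → ℝ) (η : Euc d) : ℝ := Metric.infDist η (subdiff0 R)

/-- Standing assumptions (1.9)–(1.11) on the dissipation `R`. -/
def StdDissipation (R : Euc d → ℝ) (c C : ℝ) : Prop :=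
  ConvexOn ℝ Set.univ R ∧ (∀ l : ℝ, 0 < l → ∀ z, R (l • z) = l * R z) ∧
    0 < c ∧ c ≤ C ∧ (∀ z, c * ‖z‖ ≤ R z) ∧ (∀ z, R z ≤ C * ‖z‖)

/-- The time-independent energy `E(z) = ½⟨Az,z⟩ + F(z)`. -/
def En (A : Euc d →L[ℝ] Euc d) (F : Euc d → ℝ) (z : Euc d) : ℝ :=
  (1 / 2) * ⟪A z, z⟫ + F z

/-- `D_z Î(s,z) = Az + ∇F(z) − ℓ̂(s)`. -/
def DzI (A : Euc d →L[ℝ] Euc d) (F : Euc d → ℝ) (lhat : ℝ → Euc d) (s : ℝ) (z : Euc d) :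
    Euc d := A z + gradient F z - lhat s

/-- Total variation of `f` on `[a,b]`. -/
def Var (f : ℝ → Euc d) (a b : ℝ) : ℝ := (eVariationOn f (Icc a b)).toReal

/-- The set `M` where `t̂` is strictly increasing. -/
def Mset (S : ℝ) (that : ℝ → ℝ) : Set ℝ :=
  {s | s ∈ Ioo 0 S ∧ ∀ s₁ ∈ Icc 0 S, ∀ s₂ ∈ Icc 0 S, s₁ < s → s < s₂ → that s₁ < that s₂}

/-- Conditions (2.1)–(2.4), with `t'`, `z'` the a.e. derivatives of `t̂`, `ẑ`. -/
structure SatisfiesConds (R : Euc d → ℝ) (A : Euc d →L[ℝ] Euc d) (F : Euc d → ℝ)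
    (T : ℝ) (z₀ : Euc d) (S : ℝ) (that : ℝ → ℝ) (zhat lhat : ℝ → Euc d)
    (t' : ℝ → ℝ) (z' : ℝ → Euc d) : Prop where
  deriv_t : ∀ᵐ s ∂(volume.restrict (Ioo 0 S)), HasDerivAt that (t' s) s
  deriv_z : ∀ᵐ s ∂(volume.restrict (Ioo 0 S)), HasDerivAt zhat (z' s) s
  t_init : that 0 = 0
  t_final : that S = T
  z_init : zhat 0 = z₀
  c22 : ∀ᵐ s ∂(volume.restrict (Ioo 0 S)),
      0 ≤ t' s ∧ t' s * distR R (-(DzI A F lhat s (zhat s))) = 0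
  c23 : ∀ᵐ s ∂(volume.restrict (Ioo 0 S)),
      t' s + R (z' s) + ‖z' s‖ * distR R (-(DzI A F lhat s (zhat s))) = 1
  c24 : ∀ s₁ s₂ : ℝ, 0 ≤ s₁ → s₁ ≤ s₂ → s₂ ≤ S →
      En A F (zhat s₂) + ∫ r in s₁..s₂,
          (R (z' r) + ‖z' r‖ * distR R (-(DzI A F lhat r (zhat r)))) =
        En A F (zhat s₁) + ∫ r in s₁..s₂, ⟪lhat r, z' r⟫

/-- Relaxed, normalized, p-parametrized BV solution (Definition 3.1). -/
def IsRelaxedSolution (R : Euc d → ℝ) (A : Euc d →L[ℝ] Euc d) (F : Euc d → ℝ)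
    (T : ℝ) (z₀ : Euc d) (ℓ : ℝ → Euc d)
    (S : ℝ) (that : ℝ → ℝ) (zhat lhat : ℝ → Euc d) : Prop :=
  0 < S ∧ (∃ L : ℝ≥0, LipschitzOnWith L that (Icc 0 S)) ∧
    (∃ L : ℝ≥0, LipschitzOnWith L zhat (Icc 0 S)) ∧
    BoundedVariationOn lhat (Icc 0 S) ∧
    ∃ t' z', SatisfiesConds R A F T z₀ S that zhat lhat t' z' ∧
      ∀ᵐ s ∂(volume.restrict (Mset S that)), lhat s = ℓ (that s)


/-- One-sided limits of the BV load, with conventions at the endpoints. -/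
def OneSidedLimits (T : ℝ) (ℓ lL lR : ℝ → Euc d) : Prop :=
  (∀ t ∈ Ioc (0 : ℝ) T, Tendsto ℓ (nhdsWithin t (Iio t)) (nhds (lL t))) ∧ lL 0 = ℓ 0 ∧
    (∀ t ∈ Ico (0 : ℝ) T, Tendsto ℓ (nhdsWithin t (Ioi t)) (nhds (lR t))) ∧ lR T = ℓ T

/-- The compatibility condition (2.5). -/
def Compat25 (T S : ℝ) (that : ℝ → ℝ) (lhat ℓ lL lR : ℝ → Euc d) : Prop :=
  ∀ tstar ∈ Icc (0 : ℝ) T, ∃ sstar ∈ Icc (0 : ℝ) S, that sstar = tstar ∧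
    lhat sstar ∈ ({ℓ tstar, lL tstar, lR tstar} : Set (Euc d)) ∧
    ∀ s ∈ Icc (0 : ℝ) S, that s = tstar →
      (s < sstar → lhat s = lL tstar) ∧ (sstar < s → lhat s = lR tstar)

lemma mset_measurable (S : ℝ) (that : ℝ → ℝ) : MeasurableSet (Mset S that) := by
  have heq : Mset S that = Ioo 0 S \ ⋃ (p : ℝ × ℝ) (_ : p.1 ∈ Icc 0 S) (_ : p.2 ∈ Icc 0 S)
      (_ : that p.2 ≤ that p.1), Ioo p.1 p.2 := by
    ext s
    constructor
    · rintro ⟨hs, h⟩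
      refine ⟨hs, ?_⟩
      simp only [mem_iUnion, not_exists]
      rintro ⟨s₁, s₂⟩ h1 h2 hle ⟨hlt1, hlt2⟩
      exact absurd (h s₁ h1 s₂ h2 hlt1 hlt2) (not_lt.2 hle)
    · rintro ⟨hs, h⟩
      refine ⟨hs, fun s₁ h1 s₂ h2 hlt1 hlt2 => ?_⟩
      by_contra hcon
      exact h (mem_iUnion.2 ⟨(s₁, s₂), mem_iUnion.2 ⟨h1, mem_iUnion.2
        ⟨h2, mem_iUnion.2 ⟨not_lt.1 hcon, hlt1, hlt2⟩⟩⟩⟩)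
  rw [heq]
  refine measurableSet_Ioo.diff (IsOpen.measurableSet ?_)
  exact isOpen_iUnion fun p => isOpen_iUnion fun _ => isOpen_iUnion fun _ =>
    isOpen_iUnion fun _ => isOpen_Ioo

lemma mset_left {S : ℝ} {that : ℝ → ℝ} (hcont : ContinuousOn that (Icc 0 S))
    {s : ℝ} (hs : s ∈ Mset S that) {s₁ : ℝ} (h1 : s₁ ∈ Icc 0 S) (hlt : s₁ < s) :
    that s₁ ≤ that s := by
  obtain ⟨hsIoo, hmain⟩ := hs
  have hsub : Ioo s S ⊆ Icc 0 S := fun x hx => ⟨(hsIoo.1.trans hx.1).le, hx.2.le⟩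
  have htend : Tendsto that (𝓝[Ioo s S] s) (𝓝 (that s)) :=
    (hcont s ⟨hsIoo.1.le, hsIoo.2.le⟩).mono hsub
  have hne : (𝓝[Ioo s S] s).NeBot := by
    rw [nhdsWithin_Ioo_eq_nhdsGT hsIoo.2]; infer_instance
  refine ge_of_tendsto htend ?_
  exact eventually_mem_nhdsWithin.mono fun x hx =>
    (hmain s₁ h1 x (hsub hx) hlt hx.1).le

lemma mset_right {S : ℝ} {that : ℝ → ℝ} (hcont : ContinuousOn that (Icc 0 S))
    {s : ℝ} (hs : s ∈ Mset S that) {s₂ : ℝ} (h2 : s₂ ∈ Icc 0 S) (hlt : s < s₂) :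
    that s ≤ that s₂ := by
  obtain ⟨hsIoo, hmain⟩ := hs
  have hsub : Ioo 0 s ⊆ Icc 0 S := fun x hx => ⟨hx.1.le, (hx.2.trans hsIoo.2).le⟩
  have htend : Tendsto that (𝓝[Ioo 0 s] s) (𝓝 (that s)) :=
    (hcont s ⟨hsIoo.1.le, hsIoo.2.le⟩).mono hsub
  have hne : (𝓝[Ioo 0 s] s).NeBot := by
    rw [nhdsWithin_Ioo_eq_nhdsLT hsIoo.1]; infer_instance
  refine le_of_tendsto htend ?_
  exact eventually_mem_nhdsWithin.mono fun x hx =>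
    (hmain x (hsub hx) s₂ h2 hx.2 hlt).le

lemma mset_three {S : ℝ} {that : ℝ → ℝ} (hcont : ContinuousOn that (Icc 0 S))
    {a b c : ℝ} (ha : a ∈ Mset S that) (hb : b ∈ Mset S that) (hc : c ∈ Mset S that)
    (hab : a < b) (hbc : b < c) (hval : that a = that c) : False := by
  have haI : a ∈ Ioo 0 S := ha.1
  have hcI : c ∈ Ioo 0 S := hc.1
  set s₁ := (a + b) / 2 with hs₁
  set s₂ := (b + c) / 2 with hs₂
  have h1 : a < s₁ := by simp only [hs₁]; linarith
  have h2 : s₁ < b := by simp only [hs₁]; linarith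
  have h3 : b < s₂ := by simp only [hs₂]; linarith
  have h4 : s₂ < c := by simp only [hs₂]; linarith
  have hs₁I : s₁ ∈ Icc 0 S := ⟨(haI.1.trans h1).le, ((h2.trans hbc).trans hcI.2).le⟩
  have hs₂I : s₂ ∈ Icc 0 S := ⟨(haI.1.trans (h1.trans (h2.trans h3))).le, (h4.trans hcI.2).le⟩
  have e1 : that a ≤ that s₁ := mset_right hcont ha hs₁I h1
  have e2 : that s₁ ≤ that c := mset_left hcont hc hs₁I (h2.trans (h3.trans h4))
  have e3 : that a ≤ that s₂ := mset_right hcont ha hs₂I (h1.trans (h2.trans h3))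
  have e4 : that s₂ ≤ that c := mset_left hcont hc hs₂I h4
  have := hb.2 s₁ hs₁I s₂ hs₂I h2 h3
  linarith

lemma fib_countable {S : ℝ} {that : ℝ → ℝ} (hcont : ContinuousOn that (Icc 0 S)) (t : ℝ) :
    ({s | s ∈ Mset S that ∧ that s = t}).Countable := by
  set Fib := {s | s ∈ Mset S that ∧ that s = t} with hF
  rcases Fib.eq_empty_or_nonempty with h | hne
  · rw [h]; exact countable_empty
  · have hbb : BddBelow Fib := ⟨0, fun x hx => hx.1.1.1.le⟩
    have hba : BddAbove Fib := ⟨S, fun x hx => hx.1.1.2.le⟩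
    have hsub : Fib ⊆ {sInf Fib, sSup Fib} := by
      intro b hb
      by_contra hbn
      simp only [mem_insert_iff, mem_singleton_iff, not_or] at hbn
      have hlt1 : sInf Fib < b := lt_of_le_of_ne (csInf_le hbb hb) (Ne.symm hbn.1)
      have hlt2 : b < sSup Fib := lt_of_le_of_ne (le_csSup hba hb) hbn.2
      obtain ⟨a, haF, hab⟩ := exists_lt_of_csInf_lt hne hlt1
      obtain ⟨c, hcF, hbc⟩ := exists_lt_of_lt_csSup hne hlt2
      exact mset_three hcont haF.1 hb.1 hcF.1 hab hbc (haF.2.trans hcF.2.symm)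
    exact Set.Countable.mono hsub (((countable_singleton _).insert _))


lemma jumps_countable {d : ℕ} (T : ℝ) (hT : 0 < T) (ℓ lL lR : ℝ → Euc d)
    (hBV : BoundedVariationOn ℓ (Icc 0 T)) (hlim : OneSidedLimits T ℓ lL lR) :
    ∃ D : Set ℝ, D.Countable ∧ ∀ t ∈ Icc (0:ℝ) T, t ∉ D → lL t = ℓ t ∧ lR t = ℓ t := by
  -- coordinate functions are BV
  have hgBV : ∀ i : Fin d, BoundedVariationOn (fun x => ℓ x i) (Icc 0 T) := by
    intro i
    have h := (EuclideanSpace.proj (𝕜 := ℝ) i).lipschitz.comp_boundedVariationOn hBV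
    have he : (⇑(EuclideanSpace.proj (𝕜 := ℝ) i) ∘ ℓ) = fun x => ℓ x i := by
      funext x; rfl
    rwa [he] at h
  have hdec : ∀ i : Fin d, ∃ p q : ℝ → ℝ, MonotoneOn p (Icc 0 T) ∧ MonotoneOn q (Icc 0 T) ∧
      (fun x => ℓ x i) = p - q := fun i =>
    (hgBV i).locallyBoundedVariationOn.exists_monotoneOn_sub_monotoneOn
  choose p q hp hq hpq using hdec
  -- monotone extensions to all of ℝ
  set P : Fin d → ℝ → ℝ := fun i x => p i (projIcc (0:ℝ) T hT.le x) with hP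
  set Q : Fin d → ℝ → ℝ := fun i x => q i (projIcc (0:ℝ) T hT.le x) with hQ
  have hPmono : ∀ i, Monotone (P i) := fun i x y hxy =>
    hp i (projIcc (0:ℝ) T hT.le x).2 (projIcc (0:ℝ) T hT.le y).2
      (Subtype.coe_le_coe.2 (monotone_projIcc hT.le hxy))
  have hQmono : ∀ i, Monotone (Q i) := fun i x y hxy =>
    hq i (projIcc (0:ℝ) T hT.le x).2 (projIcc (0:ℝ) T hT.le y).2
      (Subtype.coe_le_coe.2 (monotone_projIcc hT.le hxy))
  refine ⟨({0, T} : Set ℝ) ∪ ⋃ i : Fin d,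
      ({x | ¬ContinuousAt (P i) x} ∪ {x | ¬ContinuousAt (Q i) x}), ?_, ?_⟩
  · refine (Set.countable_insert.2 (countable_singleton _)).union
      (countable_iUnion fun i => ((hPmono i).countable_not_continuousAt.union
        (hQmono i).countable_not_continuousAt))
  · intro t ht htD
    simp only [mem_union, mem_iUnion, mem_insert_iff, mem_singleton_iff, not_or, not_exists] at htD
    obtain ⟨⟨ht0, htT⟩, hcont⟩ := htD
    have htIoo : t ∈ Ioo (0:ℝ) T := ⟨lt_of_le_of_ne ht.1 (Ne.symm ht0), lt_of_le_of_ne ht.2 htT⟩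
    -- each coordinate is continuous within Icc 0 T at t
    have hcw : ∀ i : Fin d, ContinuousWithinAt (fun x => ℓ x i) (Icc 0 T) t := by
      intro i
      have hci := hcont i
      simp only [mem_setOf_eq, not_not] at hci
      have hPc : ContinuousAt (P i) t := hci.1
      have hQc : ContinuousAt (Q i) t := hci.2
      have heq : EqOn (fun x => ℓ x i) (fun x => P i x - Q i x) (Icc 0 T) := by
        intro x hx
        have h1 : ℓ x i = p i x - q i x := by
          have := congrFun (hpq i) x; simpa using this
        simp only [hP, hQ, projIcc_of_mem hT.le hx, h1]
      exact (((hPc.sub hQc).continuousWithinAt).congr heq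
        (heq ⟨htIoo.1.le, htIoo.2.le⟩))
    constructor
    · -- left limit
      have hne : (𝓝[Ioo 0 t] t).NeBot := by
        rw [nhdsWithin_Ioo_eq_nhdsLT htIoo.1]; infer_instance
      have hL := hlim.1 t ⟨htIoo.1, htIoo.2.le⟩
      refine PiLp.ext fun i => ?_
      have h1 : Tendsto (fun x => ℓ x i) (𝓝[Ioo 0 t] t) (𝓝 (lL t i)) :=
        ((EuclideanSpace.proj (𝕜 := ℝ) i).continuous.tendsto (lL t)).comp
          (hL.mono_left (nhdsWithin_mono t (Ioo_subset_Iio_self (a := (0:ℝ)))))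
      have h2 : Tendsto (fun x => ℓ x i) (𝓝[Ioo 0 t] t) (𝓝 (ℓ t i)) :=
        (hcw i).mono (fun x hx => ⟨hx.1.le, (hx.2.trans htIoo.2).le⟩) |>.mono_left le_rfl
      exact tendsto_nhds_unique h1 h2
    · -- right limit
      have hne : (𝓝[Ioo t T] t).NeBot := by
        rw [nhdsWithin_Ioo_eq_nhdsGT htIoo.2]; infer_instance
      have hR := hlim.2.2.1 t ⟨htIoo.1.le, htIoo.2⟩
      refine PiLp.ext fun i => ?_
      have h1 : Tendsto (fun x => ℓ x i) (𝓝[Ioo t T] t) (𝓝 (lR t i)) :=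
        ((EuclideanSpace.proj (𝕜 := ℝ) i).continuous.tendsto (lR t)).comp
          (hR.mono_left (nhdsWithin_mono t (Ioo_subset_Ioi_self : Ioo t T ⊆ Ioi t)))
      have h2 : Tendsto (fun x => ℓ x i) (𝓝[Ioo t T] t) (𝓝 (ℓ t i)) :=
        (hcw i).mono (fun x hx => ⟨(htIoo.1.trans hx.1).le, hx.2.le⟩)
      exact tendsto_nhds_unique h1 h2


/-- **Lemma 3.2.** Every normalized p-parametrized BV solution, i.e. a tuple
satisfying (2.1)-(2.4) together with the compatibility condition (2.5), satisfies
the relaxed compatibility (3.1) a.e. on the set where the parametrized time is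
strictly increasing; in particular it is a relaxed solution. -/
theorem lemma_3_2 {d : ℕ}
    (R : Euc d → ℝ) (c C : ℝ) (hR : StdDissipation R c C)
    (A : Euc d →L[ℝ] Euc d) (hAsymm : ∀ x y : Euc d, ⟪A x, y⟫ = ⟪x, A y⟫)
    (hApos : ∀ z : Euc d, z ≠ 0 → 0 < ⟪A z, z⟫)
    (F : Euc d → ℝ) (hF : ContDiff ℝ 2 F) (hFnonneg : ∀ z, 0 ≤ F z)
    (T : ℝ) (hT : 0 < T) (z₀ : Euc d)
    (ℓ lL lR : ℝ → Euc d) (hℓBV : BoundedVariationOn ℓ (Icc 0 T))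
    (hlim : OneSidedLimits T ℓ lL lR)
    (S : ℝ) (hS : 0 < S) (that : ℝ → ℝ) (zhat lhat : ℝ → Euc d)
    (t' : ℝ → ℝ) (z' : ℝ → Euc d)
    (hLipt : ∃ L : ℝ≥0, LipschitzOnWith L that (Icc 0 S))
    (hLipz : ∃ L : ℝ≥0, LipschitzOnWith L zhat (Icc 0 S))
    (hlhatBV : BoundedVariationOn lhat (Icc 0 S))
    (hconds : SatisfiesConds R A F T z₀ S that zhat lhat t' z')
    (hcompat : Compat25 T S that lhat ℓ lL lR) :
    (∀ᵐ s ∂(volume.restrict (Mset S that)), lhat s = ℓ (that s)) ∧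
      IsRelaxedSolution R A F T z₀ ℓ S that zhat lhat := by
  obtain ⟨Lt, hLt⟩ := hLipt
  have hcont : ContinuousOn that (Icc 0 S) := hLt.continuousOn
  obtain ⟨D, hDc, hD⟩ := jumps_countable T hT ℓ lL lR hℓBV hlim
  set B : Set ℝ := ⋃ t ∈ D, {s | s ∈ Mset S that ∧ that s = t} with hB
  have hBc : B.Countable := hDc.biUnion fun t _ => fib_countable hcont t
  have key : ∀ s ∈ Mset S that, s ∉ B → lhat s = ℓ (that s) := by
    intro s hsM hsB
    have hsIoo : s ∈ Ioo 0 S := hsM.1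
    have h0 : (0:ℝ) ∈ Icc 0 S := ⟨le_rfl, hS.le⟩
    have hSm : S ∈ Icc 0 S := ⟨hS.le, le_rfl⟩
    have ht1 : 0 ≤ that s := by
      have := mset_left hcont hsM h0 hsIoo.1
      rwa [hconds.t_init] at this
    have ht2 : that s ≤ T := by
      have := mset_right hcont hsM hSm hsIoo.2
      rwa [hconds.t_final] at this
    have htD : that s ∉ D := by
      intro hmem
      exact hsB (mem_biUnion hmem ⟨hsM, rfl⟩)
    obtain ⟨hLeq, hReq⟩ := hD (that s) ⟨ht1, ht2⟩ htD
    obtain ⟨sstar, hsstarI, hss, hmemset, hside⟩ := hcompat (that s) ⟨ht1, ht2⟩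
    have hsIcc : s ∈ Icc 0 S := ⟨hsIoo.1.le, hsIoo.2.le⟩
    rcases lt_trichotomy s sstar with h | h | h
    · rw [(hside s hsIcc rfl).1 h, hLeq]
    · rw [← h] at hmemset
      simp only [mem_insert_iff, mem_singleton_iff] at hmemset
      rcases hmemset with h1 | h1 | h1
      · exact h1
      · rw [h1, hLeq]
      · rw [h1, hReq]
    · rw [(hside s hsIcc rfl).2 h, hReq]
  have hMmeas := mset_measurable S that
  have hae : ∀ᵐ s ∂(volume.restrict (Mset S that)), lhat s = ℓ (that s) := by
    have h1 : ∀ᵐ s ∂(volume.restrict (Mset S that)), s ∉ B := by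
      refine ae_restrict_of_ae ?_
      rw [ae_iff]
      simpa using hBc.measure_zero volume
    have h2 : ∀ᵐ s ∂(volume.restrict (Mset S that)), s ∈ Mset S that := ae_restrict_mem hMmeas
    filter_upwards [h1, h2] with s hs1 hs2
    exact key s hs2 hs1
  exact ⟨hae, hS, ⟨Lt, hLt⟩, hLipz, hlhatBV, t', z', hconds, hae⟩


end
end

section
/- Let S > 0, let ẑ : [0,S] → ℝ^d be Lipschitz and ℓ̂ : [0,S] → ℝ^d of bounded variation, and define Î(s,z) := E(z) − ⟨ℓ̂(s), z⟩ with D_zÎ(s,z) = Az + ∇F(z) − ℓ̂(s). Then for all 0 ≤ s₁ ≤ s₂ ≤ S one has E(ẑ(s₂)) + ∫_{s₁}^{s₂} [R(ẑ'(r)) + ‖ẑ'(r)‖·dist(−D_zÎ(r, ẑ(r)), ∂R(0))] dr ≥ E(ẑ(s₁)) + ∫_{s₁}^{s₂} ⟨ℓ̂(r), ẑ'(r)⟩ dr. (Lemma B.1) -/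
open MeasureTheory Set Filter
open scoped RealInnerProductSpace Topology NNReal

noncomputable section

variable {d : ℕ}

lemma key_ineq (R : Euc d → ℝ) (c C : ℝ) (hR : StdDissipation R c C) (w v : Euc d) :
    ⟪w, v⟫ ≤ R v + ‖v‖ * distR R w := by
  obtain ⟨hconv, hhom, hc, hcC, hlow, hupp⟩ := hR
  have hR0 : ∀ z, 0 ≤ R z := fun z => le_trans (by positivity) (hlow z)
  rcases eq_or_ne v 0 with rfl | hv
  · simp only [inner_zero_right, norm_zero, zero_mul, add_zero]
    exact hR0 0
  · have hvn : 0 < ‖v‖ := norm_pos_iff.mpr hv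
    have hne : (subdiff0 R).Nonempty := ⟨0, fun u => by simpa using hR0 u⟩
    have : Nonempty (subdiff0 R) := hne.to_subtype
    have hd : (⟪w, v⟫ - R v) / ‖v‖ ≤ distR R w := by
      rw [distR, Metric.infDist_eq_iInf]
      refine le_ciInf fun p => ?_
      rw [div_le_iff₀ hvn]
      have h1 : ⟪(p : Euc d), v⟫ ≤ R v := p.2 v
      have h2 : ⟪w - p, v⟫ ≤ ‖w - (p : Euc d)‖ * ‖v‖ := real_inner_le_norm _ _
      have h3 : ⟪w, v⟫ = ⟪(p : Euc d), v⟫ + ⟪w - p, v⟫ := by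
        rw [← inner_add_left, add_sub_cancel]
      have h4 : dist w (p : Euc d) = ‖w - (p : Euc d)‖ := dist_eq_norm _ _
      nlinarith [norm_nonneg v]
    rw [div_le_iff₀ hvn] at hd
    nlinarith

lemma monotone_ftc {f D : ℝ → ℝ} (hf : Monotone f) {a b : ℝ} (hab : a ≤ b)
    (hD : ∀ᵐ x ∂(volume.restrict (Ioo a b)), HasDerivAt f (D x) x) :
    ∫ x in a..b, D x ≤ f b - f a := by
  rcases eq_or_lt_of_le hab with rfl | hab'
  · simp
  set μ := hf.stieltjesFunction.measure with hμ
  have h2 : ∀ᵐ x ∂(volume.restrict (Ioo a b)), D x = (μ.rnDeriv volume x).toReal := by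
    filter_upwards [hD, ae_restrict_of_ae hf.ae_hasDerivAt] with x hx hx'
    exact hx.unique hx'
  have h3 : ∫ x in a..b, D x = ∫ x in Ioo a b, (μ.rnDeriv volume x).toReal := by
    rw [intervalIntegral.integral_of_le hab,
      show volume.restrict (Ioc a b) = volume.restrict (Ioo a b) from
        (Measure.restrict_congr_set Ioo_ae_eq_Ioc).symm]
    exact integral_congr_ae h2
  have hfin : μ (Ioo a b) ≠ ⊤ := by
    rw [StieltjesFunction.measure_Ioo]; exact ENNReal.ofReal_ne_top
  have h4 : ∫ x in Ioo a b, (μ.rnDeriv volume x).toReal ≤ (μ (Ioo a b)).toReal :=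
    Measure.setIntegral_toReal_rnDeriv_le hfin
  have hlb : Function.leftLim (hf.stieltjesFunction) b ≤ f b := by
    apply le_of_tendsto ((hf.stieltjesFunction).mono.tendsto_leftLim b)
    filter_upwards [self_mem_nhdsWithin] with y hy
    rw [show (hf.stieltjesFunction) y = Function.rightLim f y from hf.stieltjesFunction_eq y]
    exact hf.rightLim_le hy
  have hfa : f a ≤ hf.stieltjesFunction a := by
    rw [hf.stieltjesFunction_eq]; exact hf.le_rightLim le_rfl
  have h5 : (μ (Ioo a b)).toReal ≤ f b - f a := by
    rw [StieltjesFunction.measure_Ioo]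
    rcases le_total (Function.leftLim hf.stieltjesFunction b - hf.stieltjesFunction a) 0 with h | h
    · rw [ENNReal.ofReal_eq_zero.mpr h]
      simpa using sub_nonneg.mpr (hf hab)
    · rw [ENNReal.toReal_ofReal h]; linarith
  rw [h3]; exact h4.trans h5

lemma bv_measurable {S : ℝ} (hS : 0 ≤ S) (lhat : ℝ → Euc d)
    (hBV : BoundedVariationOn lhat (Icc 0 S)) :
    ∃ m : ℝ → Euc d, Measurable m ∧ EqOn m lhat (Icc 0 S) := by
  set φ : ℝ → ℝ := fun r => min (max r 0) S with hφ
  have hφm : Monotone φ := (monotone_id.max monotone_const).min monotone_const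
  have himg : φ '' univ ⊆ Icc 0 S := by
    rintro _ ⟨x, -, rfl⟩
    exact ⟨le_min (le_max_right _ _) hS, min_le_right _ _⟩
  have hBV' : BoundedVariationOn (lhat ∘ φ) univ := by
    rw [BoundedVariationOn, eVariationOn.comp_eq_of_monotoneOn lhat φ (hφm.monotoneOn univ)]
    exact fun h => hBV (top_unique (h ▸ eVariationOn.mono lhat himg))
  have hmeas : Measurable (lhat ∘ φ) := by
    refine (MeasurableEquiv.toLp 2 (Fin d → ℝ)).measurable.comp
      (measurable_pi_iff.mpr fun i => ?_ : Measurable fun r => WithLp.ofLp ((lhat ∘ φ) r))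
    show Measurable (fun r => (lhat ∘ φ) r i)
    have hL : LocallyBoundedVariationOn (fun r => EuclideanSpace.proj (𝕜 := ℝ) i ((lhat ∘ φ) r)) univ :=
      (EuclideanSpace.proj (𝕜 := ℝ) i).lipschitz.comp_locallyBoundedVariationOn
        hBV'.locallyBoundedVariationOn
    obtain ⟨p, q, hp, hq, hpq⟩ := hL.exists_monotoneOn_sub_monotoneOn
    have : (fun r => (lhat ∘ φ) r i) = fun r => p r - q r := by
      funext r
      have := congrFun hpq r
      simpa [EuclideanSpace.proj] using this
    rw [this]
    exact ((monotoneOn_univ.mp hp).measurable).sub ((monotoneOn_univ.mp hq).measurable)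
  refine ⟨lhat ∘ φ, hmeas, fun x hx => ?_⟩
  have : φ x = x := by
    simp only [hφ]
    rw [max_eq_left hx.1, min_eq_left hx.2]
  simp [Function.comp, this]

lemma R_continuous (R : Euc d → ℝ) (c C : ℝ) (hR : StdDissipation R c C) :
    Continuous R := by
  obtain ⟨hconv, hhom, hc, hcC, hlow, hupp⟩ := hR
  have hC0 : 0 ≤ C := le_trans hc.le hcC
  have hsub : ∀ u v : Euc d, R (u + v) ≤ R u + R v := by
    intro u v
    have h1 := hconv.2 (mem_univ u) (mem_univ v)
      (by norm_num : (0:ℝ) ≤ 1/2) (by norm_num : (0:ℝ) ≤ 1/2) (by norm_num)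
    have h2 : R ((1/2 : ℝ) • (u + v)) = (1/2 : ℝ) * R (u + v) := hhom _ (by norm_num) _
    rw [smul_add] at h2
    simp only [smul_eq_mul] at h1
    rw [h2] at h1
    linarith
  have hkey : ∀ x y : Euc d, R x - R y ≤ C * ‖x - y‖ := by
    intro x y
    have h1 : R x ≤ R y + R (x - y) := by
      calc R x = R (y + (x - y)) := by rw [add_sub_cancel]
      _ ≤ R y + R (x - y) := hsub _ _
    linarith [hupp (x - y)]
  have hlip : LipschitzWith (Real.toNNReal C) R := by
    apply LipschitzWith.of_dist_le_mul
    intro x y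
    rw [Real.dist_eq, dist_eq_norm, Real.coe_toNNReal C hC0]
    have h2 := hkey x y
    have h3 := hkey y x
    rw [norm_sub_rev] at h3
    exact abs_sub_le_iff.mpr ⟨h2, h3⟩
  exact hlip.continuous

/-- **Lemma B.1.** The lower energy estimate, valid for arbitrary Lipschitz `ẑ` and
BV loads `ℓ̂`. -/
theorem lemma_B_1 {d : ℕ}
    (R : Euc d → ℝ) (c C : ℝ) (hR : StdDissipation R c C)
    (A : Euc d →L[ℝ] Euc d) (hAsymm : ∀ x y : Euc d, ⟪A x, y⟫ = ⟪x, A y⟫)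
    (hApos : ∀ z : Euc d, z ≠ 0 → 0 < ⟪A z, z⟫)
    (F : Euc d → ℝ) (hF : ContDiff ℝ 2 F) (hFnonneg : ∀ z, 0 ≤ F z)
    (S : ℝ) (hS : 0 < S) (zhat : ℝ → Euc d) (z' : ℝ → Euc d)
    (hLipz : ∃ L : ℝ≥0, LipschitzOnWith L zhat (Icc 0 S))
    (hderiv : ∀ᵐ s ∂(volume.restrict (Ioo 0 S)), HasDerivAt zhat (z' s) s)
    (lhat : ℝ → Euc d) (hlhatBV : BoundedVariationOn lhat (Icc 0 S))
    (s₁ s₂ : ℝ) (h0 : 0 ≤ s₁) (h12 : s₁ ≤ s₂) (h2S : s₂ ≤ S) :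
    En A F (zhat s₁) + ∫ r in s₁..s₂, ⟪lhat r, z' r⟫ ≤
      En A F (zhat s₂) + ∫ r in s₁..s₂,
        (R (z' r) + ‖z' r‖ * distR R (-(DzI A F lhat r (zhat r)))) := by
  obtain ⟨L, hLz⟩ := hLipz
  rcases eq_or_lt_of_le h12 with rfl | hlt
  · simp
  have hC0 : 0 ≤ C := le_trans hR.2.2.1.le hR.2.2.2.1
  have hsubIcc : Icc s₁ s₂ ⊆ Icc 0 S := Icc_subset_Icc h0 h2S
  have hsubIoo : Ioo s₁ s₂ ⊆ Ioo 0 S := Ioo_subset_Ioo h0 h2S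
  have hsubIooIcc : Ioo s₁ s₂ ⊆ Icc 0 S := fun x hx => hsubIcc (Ioo_subset_Icc_self hx)
  set ν := volume.restrict (Ioo s₁ s₂) with hν
  have hrestr : volume.restrict (Ioc s₁ s₂) = ν :=
    (Measure.restrict_congr_set Ioo_ae_eq_Ioc).symm
  -- continuity of zhat, bounds
  have hzc : ContinuousOn zhat (Icc 0 S) := hLz.continuousOn
  obtain ⟨Mz, hMz⟩ : ∃ M, ∀ r ∈ Icc 0 S, ‖zhat r‖ ≤ M :=
    isCompact_Icc.exists_bound_of_continuousOn hzc
  have hcpos : 0 < c := hR.2.2.1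
  have hMz0 : 0 ≤ Mz := le_trans (norm_nonneg _) (hMz 0 ⟨le_rfl, hS.le⟩)
  -- gradient continuity
  have hgradcont : Continuous (fun z : Euc d => gradient F z) := by
    show Continuous fun z => (InnerProductSpace.toDual ℝ (Euc d)).symm (fderiv ℝ F z)
    exact (InnerProductSpace.toDual ℝ (Euc d)).symm.continuous.comp
      (hF.continuous_fderiv two_ne_zero)
  have hXcont : Continuous (fun z : Euc d => A z + gradient F z) :=
    A.continuous.add hgradcont
  obtain ⟨MG, hMG⟩ : ∃ M, ∀ r ∈ Icc 0 S, ‖A (zhat r) + gradient F (zhat r)‖ ≤ M :=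
    isCompact_Icc.exists_bound_of_continuousOn (hXcont.comp_continuousOn hzc)
  have hMG0 : 0 ≤ MG := le_trans (norm_nonneg _) (hMG 0 ⟨le_rfl, hS.le⟩)
  -- lhat bound and measurability
  obtain ⟨m, hm_meas, hm_eq⟩ := bv_measurable hS.le lhat hlhatBV
  set Ml := ‖lhat 0‖ + (eVariationOn lhat (Icc 0 S)).toReal with hMl
  have hlb : ∀ r ∈ Icc 0 S, ‖lhat r‖ ≤ Ml := by
    intro r hr
    have hd := hlhatBV.dist_le hr (⟨le_rfl, hS.le⟩ : (0:ℝ) ∈ Icc 0 S)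
    have h5 : ‖lhat r‖ - ‖lhat 0‖ ≤ ‖lhat r - lhat 0‖ := norm_sub_norm_le _ _
    rw [dist_eq_norm] at hd
    rw [hMl]; linarith
  have hMl0 : 0 ≤ Ml := le_trans (norm_nonneg _) (hlb 0 ⟨le_rfl, hS.le⟩)
  -- z' facts
  have hderiv' : ∀ᵐ r ∂ν, HasDerivAt zhat (z' r) r :=
    ae_restrict_of_ae_restrict_of_subset hsubIoo hderiv
  have hz'bd : ∀ᵐ r ∂ν, ‖z' r‖ ≤ L := by
    filter_upwards [hderiv', ae_restrict_mem measurableSet_Ioo] with r hr hrm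
    exact hr.le_of_lipschitzOn (isOpen_Ioo.mem_nhds (hsubIoo hrm))
      (hLz.mono Ioo_subset_Icc_self)
  have hz'meas : AEStronglyMeasurable z' ν := by
    have h : ∀ᵐ r ∂ν, deriv zhat r = z' r := by
      filter_upwards [hderiv'] with r hr; exact hr.deriv
    exact ((measurable_deriv zhat).aestronglyMeasurable).congr h
  have hzmeas : AEStronglyMeasurable zhat ν :=
    (hzc.mono hsubIooIcc).aestronglyMeasurable measurableSet_Ioo
  have hmlhat : AEStronglyMeasurable lhat ν := by
    refine hm_meas.aestronglyMeasurable.congr ?_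
    filter_upwards [ae_restrict_mem measurableSet_Ioo] with r hr
    exact hm_eq (hsubIooIcc hr)
  -- chain rule
  set g' : ℝ → ℝ := fun r => ⟪A (zhat r) + gradient F (zhat r), z' r⟫ with hg'def
  have hchain : ∀ᵐ r ∂ν, HasDerivAt (fun x => En A F (zhat x)) (g' r) r := by
    filter_upwards [hderiv'] with r hr
    have hA' : HasDerivAt (fun x => A (zhat x)) (A (z' r)) r :=
      A.hasFDerivAt.comp_hasDerivAt r hr
    have hq : HasDerivAt (fun x => (⟪A (zhat x), zhat x⟫ : ℝ))
        (⟪A (zhat r), z' r⟫ + ⟪A (z' r), zhat r⟫) r := hA'.inner ℝ hr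
    have hFd : HasDerivAt (fun x => F (zhat x)) (fderiv ℝ F (zhat r) (z' r)) r :=
      (((hF.differentiable two_ne_zero) (zhat r)).hasFDerivAt).comp_hasDerivAt r hr
    have hsum := (hq.const_mul (1/2 : ℝ)).add hFd
    have heq : (fun x => En A F (zhat x)) =
        fun x => (1/2 : ℝ) * ⟪A (zhat x), zhat x⟫ + F (zhat x) := rfl
    rw [heq]
    refine hsum.congr_deriv ?_
    have hsymm : ⟪A (z' r), zhat r⟫ = ⟪A (zhat r), z' r⟫ := by
      rw [hAsymm (z' r) (zhat r), real_inner_comm]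
    have hgrad : (⟪gradient F (zhat r), z' r⟫ : ℝ) = fderiv ℝ F (zhat r) (z' r) :=
      InnerProductSpace.toDual_symm_apply
    show _ = ⟪A (zhat r) + gradient F (zhat r), z' r⟫
    simp only [hg'def, inner_add_left, hgrad, hsymm]
    ring
  -- integrability
  have hfin : ν univ < ⊤ := by
    rw [hν, Measure.restrict_apply_univ]; exact measure_Ioo_lt_top
  have hIIof : ∀ (f : ℝ → ℝ), AEStronglyMeasurable f ν → ∀ B : ℝ,
      (∀ᵐ r ∂ν, |f r| ≤ B) → IntervalIntegrable f volume s₁ s₂ := by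
    intro f hm B hb
    rw [intervalIntegrable_iff_integrableOn_Ioc_of_le hlt.le, IntegrableOn, hrestr]
    refine Integrable.mono' (g := fun _ => B) ?_ hm ?_
    · exact integrable_const _
    · simpa [Real.norm_eq_abs] using hb
  have hDzmeas : AEStronglyMeasurable (fun r => -(DzI A F lhat r (zhat r))) ν := by
    have heq : (fun r => -(DzI A F lhat r (zhat r))) =
        fun r => lhat r - (A (zhat r) + gradient F (zhat r)) := by
      funext r; simp only [DzI]; abel
    rw [heq]
    exact hmlhat.sub (hXcont.comp_aestronglyMeasurable hzmeas)
  have hDzbd : ∀ᵐ r ∂ν, ‖-(DzI A F lhat r (zhat r))‖ ≤ Ml + MG := by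
    filter_upwards [ae_restrict_mem measurableSet_Ioo] with r hr
    have h1 : ‖-(DzI A F lhat r (zhat r))‖
        = ‖lhat r - (A (zhat r) + gradient F (zhat r))‖ := by
      congr 1; simp only [DzI]; abel
    rw [h1]
    calc ‖lhat r - (A (zhat r) + gradient F (zhat r))‖
        ≤ ‖lhat r‖ + ‖A (zhat r) + gradient F (zhat r)‖ := norm_sub_le _ _
    _ ≤ Ml + MG := add_le_add (hlb r (hsubIooIcc hr)) (hMG r (hsubIooIcc hr))
  have hdistR0 : ∀ η : Euc d, 0 ≤ distR R η := fun η => Metric.infDist_nonneg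
  have hdistRle : ∀ η : Euc d, distR R η ≤ ‖η‖ := by
    intro η
    have h0mem : (0 : Euc d) ∈ subdiff0 R := by
      intro u
      simpa using le_trans (mul_nonneg hcpos.le (norm_nonneg _)) (hR.2.2.2.2.1 u)
    simpa [distR, dist_eq_norm] using Metric.infDist_le_dist_of_mem (x := η) h0mem
  set f₂ : ℝ → ℝ := fun r => R (z' r) + ‖z' r‖ * distR R (-(DzI A F lhat r (zhat r)))
    with hf₂def
  have hf₂meas : AEStronglyMeasurable f₂ ν := by
    refine AEStronglyMeasurable.add ?_ (AEStronglyMeasurable.mul hz'meas.norm ?_)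
    · exact (R_continuous R c C hR).comp_aestronglyMeasurable hz'meas
    · exact (Metric.continuous_infDist_pt (subdiff0 R)).comp_aestronglyMeasurable hDzmeas
  have hf₂bd : ∀ᵐ r ∂ν, |f₂ r| ≤ C * L + L * (Ml + MG) := by
    filter_upwards [hz'bd, hDzbd] with r h1 h2
    have hR1 : R (z' r) ≤ C * L := le_trans (hR.2.2.2.2.2 _)
      (mul_le_mul_of_nonneg_left h1 hC0)
    have hR2 : 0 ≤ R (z' r) := le_trans (mul_nonneg hcpos.le (norm_nonneg _)) (hR.2.2.2.2.1 _)
    have hd1 : ‖z' r‖ * distR R (-(DzI A F lhat r (zhat r))) ≤ L * (Ml + MG) :=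
      mul_le_mul h1 (le_trans (hdistRle _) h2) (hdistR0 _) L.coe_nonneg
    have hd0 : 0 ≤ ‖z' r‖ * distR R (-(DzI A F lhat r (zhat r))) :=
      mul_nonneg (norm_nonneg _) (hdistR0 _)
    simp only [hf₂def]
    rw [abs_of_nonneg (by linarith)]
    linarith
  have hf₁meas : AEStronglyMeasurable (fun r => (⟪lhat r, z' r⟫ : ℝ)) ν :=
    hmlhat.inner hz'meas
  have hf₁bd : ∀ᵐ r ∂ν, |(⟪lhat r, z' r⟫ : ℝ)| ≤ Ml * L := by
    filter_upwards [hz'bd, ae_restrict_mem measurableSet_Ioo] with r h1 hr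
    calc |(⟪lhat r, z' r⟫ : ℝ)| ≤ ‖lhat r‖ * ‖z' r‖ := abs_real_inner_le_norm _ _
    _ ≤ Ml * L := mul_le_mul (hlb r (hsubIooIcc hr)) h1 (norm_nonneg _) hMl0
  have hg'meas : AEStronglyMeasurable g' ν :=
    (hXcont.comp_aestronglyMeasurable hzmeas).inner hz'meas
  have hg'bd : ∀ᵐ r ∂ν, |g' r| ≤ MG * L := by
    filter_upwards [hz'bd, ae_restrict_mem measurableSet_Ioo] with r h1 hr
    calc |g' r| ≤ ‖A (zhat r) + gradient F (zhat r)‖ * ‖z' r‖ := abs_real_inner_le_norm _ _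
    _ ≤ MG * L := mul_le_mul (hMG r (hsubIooIcc hr)) h1 (norm_nonneg _) hMG0
  have hint₁ := hIIof _ hf₁meas _ hf₁bd
  have hint₂ := hIIof _ hf₂meas _ hf₂bd
  have hint₃ := hIIof _ hg'meas _ hg'bd
  -- pointwise inequality (everywhere)
  have hpt : ∀ r, (⟪lhat r, z' r⟫ : ℝ) ≤ f₂ r + g' r := by
    intro r
    have hk := key_ineq R c C hR (-(DzI A F lhat r (zhat r))) (z' r)
    have hdec : (⟪-(DzI A F lhat r (zhat r)), z' r⟫ : ℝ)
        = ⟪lhat r, z' r⟫ - g' r := by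
      have h1 : -(DzI A F lhat r (zhat r))
          = lhat r - (A (zhat r) + gradient F (zhat r)) := by
        simp only [DzI]; abel
      rw [h1, inner_sub_left]
    rw [hdec] at hk
    simp only [hf₂def]
    linarith
  -- integral comparison
  have hI1 : (∫ r in s₁..s₂, (⟪lhat r, z' r⟫ : ℝ)) ≤ ∫ r in s₁..s₂, (f₂ r + g' r) :=
    intervalIntegral.integral_mono_ae_restrict hlt.le hint₁ (hint₂.add hint₃)
      (ae_of_all _ hpt)
  rw [intervalIntegral.integral_add hint₂ hint₃] at hI1
  -- FTC bound for g'
  have hftc : ∫ r in s₁..s₂, g' r ≤ En A F (zhat s₂) - En A F (zhat s₁) := by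
    -- Lipschitz constant for En ∘ zhat
    have hEn1 : ContDiff ℝ 1 (En A F) := by
      have h1 : ContDiff ℝ 1 fun z : Euc d => (⟪A z, z⟫ : ℝ) :=
        (A.contDiff.inner ℝ contDiff_id)
      exact (contDiff_const.mul h1).add (hF.of_le one_le_two)
    obtain ⟨Me, hMe⟩ : ∃ M, ∀ z ∈ Metric.closedBall (0 : Euc d) (Mz + 1),
        ‖fderiv ℝ (En A F) z‖ ≤ M :=
      (isCompact_closedBall (0 : Euc d) (Mz + 1)).exists_bound_of_continuousOn
        ((hEn1.continuous_fderiv one_ne_zero).continuousOn)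
    have hMe0 : 0 ≤ Me :=
      le_trans (norm_nonneg _) (hMe 0 (Metric.mem_closedBall_self (by linarith)))
    have hEnLip : LipschitzOnWith (Real.toNNReal Me) (En A F)
        (Metric.closedBall 0 (Mz + 1)) := by
      refine (convex_closedBall _ _).lipschitzOnWith_of_nnnorm_fderiv_le
        (fun x _ => (hEn1.differentiable one_ne_zero) x) (fun x hx => ?_)
      exact (Real.le_toNNReal_iff_coe_le hMe0).mpr (hMe x hx)
    have hmaps : MapsTo zhat (Icc 0 S) (Metric.closedBall (0 : Euc d) (Mz + 1)) := by
      intro r hr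
      rw [Metric.mem_closedBall, dist_zero_right]
      linarith [hMz r hr]
    have hKlip : LipschitzOnWith (Real.toNNReal Me * L) (fun x => En A F (zhat x))
        (Icc 0 S) := hEnLip.comp hLz hmaps
    set Kn : ℝ≥0 := Real.toNNReal Me * L with hKn
    set K : ℝ := (Kn : ℝ) with hK
    have hK0 : 0 ≤ K := Kn.coe_nonneg
    set φ : ℝ → ℝ := fun x => min (max x s₁) s₂ with hφ
    have hφmem : ∀ x, φ x ∈ Icc s₁ s₂ := fun x =>
      ⟨le_min (le_max_right _ _) hlt.le, min_le_right _ _⟩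
    have hφmono : Monotone φ := (monotone_id.max monotone_const).min monotone_const
    have hφdiff : ∀ x y : ℝ, x ≤ y → φ y - φ x ≤ y - x := by
      intro x y hxy
      have hmax : max y s₁ ≤ max x s₁ + (y - x) :=
        max_le (by linarith [le_max_left x s₁]) (by linarith [le_max_right x s₁])
      rcases min_cases (max x s₁) s₂ with ⟨h1, h2⟩ | ⟨h1, h2⟩
      · have h3 : φ y ≤ max x s₁ + (y - x) := le_trans (min_le_left _ _) hmax
        simp only [hφ] at h1 h3 ⊢
        linarith
      · have h3 : φ y ≤ s₂ := min_le_right _ _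
        simp only [hφ] at h1 h3 ⊢
        linarith
    have hhmono : Monotone (fun x => En A F (zhat (φ x)) + K * x) := by
      intro x y hxy
      simp only
      have hdist := hKlip.dist_le_mul (φ x) (hsubIcc (hφmem x)) (φ y) (hsubIcc (hφmem y))
      rw [Real.dist_eq, Real.dist_eq] at hdist
      have h1 : |φ x - φ y| ≤ y - x := by
        rw [abs_sub_comm, abs_of_nonneg (sub_nonneg.mpr (hφmono hxy))]
        exact hφdiff x y hxy
      have h2 : K * |φ x - φ y| ≤ K * (y - x) := mul_le_mul_of_nonneg_left h1 hK0
      have h3 := (abs_le.mp hdist).2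
      rw [← hK] at h3
      linarith
    have hhd : ∀ᵐ r ∂ν, HasDerivAt (fun x => En A F (zhat (φ x)) + K * x) (g' r + K) r := by
      filter_upwards [hchain, ae_restrict_mem measurableSet_Ioo] with r hr hrm
      have hKd : HasDerivAt (fun x : ℝ => K * x) K r := by
        simpa using (hasDerivAt_id r).const_mul K
      refine (hr.add hKd).congr_of_eventuallyEq ?_
      filter_upwards [isOpen_Ioo.mem_nhds hrm] with y hy
      have hyy : φ y = y := by
        simp only [hφ]
        rw [max_eq_left hy.1.le, min_eq_left hy.2.le]
      rw [hyy]; rfl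
    have hmono_res := monotone_ftc hhmono hlt.le hhd
    have hφ1 : φ s₁ = s₁ := by
      simp only [hφ]
      rw [max_eq_left le_rfl, min_eq_left hlt.le]
    have hφ2 : φ s₂ = s₂ := by
      simp only [hφ]
      rw [max_eq_left hlt.le, min_eq_left le_rfl]
    rw [intervalIntegral.integral_add hint₃ intervalIntegrable_const,
      intervalIntegral.integral_const] at hmono_res
    simp only [hφ1, hφ2, smul_eq_mul] at hmono_res
    linarith
  linarith

end
end

section
/- Let (S, t̂, ẑ, ℓ̂) with S > 0, t̂ : [0,S] → ℝ Lipschitz, ẑ : [0,S] → ℝ^d Lipschitz, ℓ̂ : [0,S] → ℝ^d of bounded variation satisfy conditions (2.1)–(2.4) for time horizon T > 0 and initial datum z₀ ∈ ℝ^d. Then ‖ẑ'(s)‖ ≤ 1/c for a.e. s ∈ (0,S), and S ≤ T + E(z₀) + (1/c)·∫₀^S ‖ℓ̂(r)‖ dr. (A priori bounds, Step 1 of the proof of Theorem 3.4) -/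
open MeasureTheory Set Filter
open scoped RealInnerProductSpace Topology NNReal

noncomputable section

variable {d : ℕ}

lemma lipschitz_integral_deriv_le {L : ℝ≥0} {f : ℝ → ℝ} (hf : LipschitzWith L f)
    {a b : ℝ} (hab : a ≤ b) {f' : ℝ → ℝ}
    (hd : ∀ᵐ x ∂(volume.restrict (Ioo a b)), HasDerivAt f (f' x) x) :
    ∫ x in Ioo a b, f' x ≤ f b - f a := by
  set μ := volume.restrict (Ioo a b) with hμ
  have hfc : Continuous f := hf.continuous
  set F : ℕ → ℝ → ℝ := fun n x => ((n : ℝ) + 1) * (f (x + 1/((n:ℝ)+1)) - f x) with hF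
  have hnpos : ∀ n : ℕ, (0:ℝ) < (n:ℝ) + 1 := fun n => by positivity
  -- measurability
  have hFc : ∀ n, Continuous (F n) := by
    intro n
    exact continuous_const.mul ((hfc.comp (continuous_id.add continuous_const)).sub hfc)
  -- bound
  have hFbd : ∀ n, ∀ᵐ x ∂μ, ‖F n x‖ ≤ (L : ℝ) := by
    intro n
    refine ae_of_all _ fun x => ?_
    have h1 : |f (x + 1/((n:ℝ)+1)) - f x| ≤ (L:ℝ) * (1/((n:ℝ)+1)) := by
      have h0 := hf.dist_le_mul (x + 1/((n:ℝ)+1)) x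
      rw [Real.dist_eq, Real.dist_eq] at h0
      have he : |x + 1/((n:ℝ)+1) - x| = 1/((n:ℝ)+1) := by
        rw [show x + 1/((n:ℝ)+1) - x = 1/((n:ℝ)+1) from by ring,
          abs_of_pos (by positivity : (0:ℝ) < 1/((n:ℝ)+1))]
      rw [he] at h0; exact h0
    have : ‖F n x‖ = ((n:ℝ)+1) * |f (x + 1/((n:ℝ)+1)) - f x| := by
      rw [hF]; simp [abs_mul, abs_of_pos (hnpos n)]
    rw [this]
    calc ((n:ℝ)+1) * |f (x + 1/((n:ℝ)+1)) - f x| ≤ ((n:ℝ)+1) * ((L:ℝ) * (1/((n:ℝ)+1))) := by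
          exact mul_le_mul_of_nonneg_left h1 (hnpos n).le
      _ = (L:ℝ) := by field_simp
  -- a.e. convergence
  have hlim : ∀ᵐ x ∂μ, Tendsto (fun n => F n x) atTop (𝓝 (f' x)) := by
    filter_upwards [hd] with x hx
    have hslope := hasDerivAt_iff_tendsto_slope.1 hx
    have hseq : Tendsto (fun n : ℕ => x + 1/((n:ℝ)+1)) atTop (𝓝[≠] x) := by
      apply tendsto_nhdsWithin_of_tendsto_nhds_of_eventually_within
      · have : Tendsto (fun n : ℕ => 1/((n:ℝ)+1)) atTop (𝓝 0) :=
          tendsto_one_div_add_atTop_nhds_zero_nat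
        simpa using (tendsto_const_nhds.add this)
      · refine Eventually.of_forall fun n => ?_
        simp only [mem_compl_iff, mem_singleton_iff]
        intro h
        have hp : (0:ℝ) < 1/((n:ℝ)+1) := by positivity
        have : (1:ℝ)/((n:ℝ)+1) = 0 := by linarith
        exact absurd this hp.ne'
    have hcomp := hslope.comp hseq
    have heq : (fun n : ℕ => F n x) = (slope f x ∘ fun n : ℕ => x + 1/((n:ℝ)+1)) := by
      funext n
      rw [hF]
      simp only [Function.comp_apply, slope_def_field]
      rw [show x + 1/((n:ℝ)+1) - x = 1/((n:ℝ)+1) from by ring]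
      rw [div_div_eq_mul_div, div_one, mul_comm]
    rw [heq]
    exact hcomp
  -- integrability of f'
  have hμfin : IsFiniteMeasure μ := by
    constructor
    rw [hμ, Measure.restrict_apply_univ, Real.volume_Ioo]
    exact ENNReal.ofReal_lt_top
  have hint : ∀ n, Integrable (F n) μ :=
    fun n => Integrable.mono' (integrable_const _) (hFc n).aestronglyMeasurable (hFbd n)
  have htendsto : Tendsto (fun n => ∫ x, F n x ∂μ) atTop (𝓝 (∫ x, f' x ∂μ)) :=
    tendsto_integral_of_dominated_convergence _ (fun n => (hFc n).aestronglyMeasurable)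
      (integrable_const _) hFbd hlim
  -- compute/estimate ∫ F n
  have hbound : ∀ n : ℕ, ∫ x, F n x ∂μ ≤ f b - f a + 2 * (L:ℝ) * (1/((n:ℝ)+1)) := by
    intro n
    set h : ℝ := 1/((n:ℝ)+1) with hh
    have hhpos : 0 < h := by positivity
    have hI : ∀ u v : ℝ, IntervalIntegrable f volume u v := fun u v =>
      hfc.intervalIntegrable u v
    have hIs : ∀ u v : ℝ, IntervalIntegrable (fun x => f (x + h)) volume u v := fun u v =>
      (hfc.comp (continuous_id.add continuous_const)).intervalIntegrable u v
    have e1 : ∫ x, F n x ∂μ = ((n:ℝ)+1) * ((∫ x in a..b, f (x + h)) - ∫ x in a..b, f x) := by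
      rw [hμ, ← MeasureTheory.integral_Ioc_eq_integral_Ioo,
        ← intervalIntegral.integral_of_le hab, ← intervalIntegral.integral_sub (hIs a b) (hI a b),
        ← intervalIntegral.integral_const_mul]
    have e2 : (∫ x in a..b, f (x + h)) = ∫ x in (a+h)..(b+h), f x :=
      intervalIntegral.integral_comp_add_right f h
    have e3 : (∫ x in (a+h)..(b+h), f x) - (∫ x in a..b, f x)
        = (∫ x in b..(b+h), f x) - ∫ x in a..(a+h), f x := by
      have h1 : (∫ x in a..b, f x) + (∫ x in b..(b+h), f x) = ∫ x in a..(b+h), f x :=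
        intervalIntegral.integral_add_adjacent_intervals (hI a b) (hI b (b+h))
      have h2 : (∫ x in a..(a+h), f x) + (∫ x in (a+h)..(b+h), f x) = ∫ x in a..(b+h), f x :=
        intervalIntegral.integral_add_adjacent_intervals (hI a (a+h)) (hI (a+h) (b+h))
      linarith
    have hub : (∫ x in b..(b+h), f x) ≤ h * (f b + (L:ℝ) * h) := by
      have hmono : (∫ x in b..(b+h), f x) ≤ ∫ _x in b..(b+h), (f b + (L:ℝ) * h) := by
        apply intervalIntegral.integral_mono_on (by linarith) (hI b (b+h))
          (intervalIntegrable_const)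
        intro x hx
        have hd0 := hf.dist_le_mul x b
        rw [Real.dist_eq, Real.dist_eq] at hd0
        have hxb : |x - b| ≤ h := by
          rw [abs_le]; constructor <;> [linarith [hx.1]; linarith [hx.2]]
        have h1 : f x - f b ≤ |f x - f b| := le_abs_self _
        have h2 : (L:ℝ) * |x - b| ≤ (L:ℝ) * h := mul_le_mul_of_nonneg_left hxb L.2
        linarith
      have hconst : (∫ _x in b..(b+h), (f b + (L:ℝ) * h)) = h * (f b + (L:ℝ) * h) := by
        rw [intervalIntegral.integral_const, smul_eq_mul]; ring
      linarith
    have hlb : h * (f a - (L:ℝ) * h) ≤ ∫ x in a..(a+h), f x := by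
      have hmono : (∫ _x in a..(a+h), (f a - (L:ℝ) * h)) ≤ ∫ x in a..(a+h), f x := by
        apply intervalIntegral.integral_mono_on (by linarith) intervalIntegrable_const (hI a (a+h))
        intro x hx
        have hd0 := hf.dist_le_mul x a
        rw [Real.dist_eq, Real.dist_eq] at hd0
        have hxa : |x - a| ≤ h := by
          rw [abs_le]; constructor <;> [linarith [hx.1]; linarith [hx.2]]
        have h1 : f a - f x ≤ |f x - f a| := by rw [abs_sub_comm]; exact le_abs_self _
        have h2 : (L:ℝ) * |x - a| ≤ (L:ℝ) * h := mul_le_mul_of_nonneg_left hxa L.2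
        linarith
      have hconst : (∫ _x in a..(a+h), (f a - (L:ℝ) * h)) = h * (f a - (L:ℝ) * h) := by
        rw [intervalIntegral.integral_const, smul_eq_mul]; ring
      linarith
    have hcalc : ∫ x, F n x ∂μ ≤ ((n:ℝ)+1) * (h*(f b + (L:ℝ)*h) - h*(f a - (L:ℝ)*h)) := by
      rw [e1, e2]
      apply mul_le_mul_of_nonneg_left _ (hnpos n).le
      rw [e3]; linarith
    have hnh : ((n:ℝ)+1) * h = 1 := by rw [hh]; field_simp
    calc ∫ x, F n x ∂μ ≤ ((n:ℝ)+1) * (h*(f b + (L:ℝ)*h) - h*(f a - (L:ℝ)*h)) := hcalc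
      _ = f b - f a + 2*(L:ℝ)*h := by
          have he : ((n:ℝ)+1) * (h*(f b + (L:ℝ)*h) - h*(f a - (L:ℝ)*h))
              = (((n:ℝ)+1)*h) * (f b - f a + 2*(L:ℝ)*h) := by ring
          rw [he, hnh, one_mul]
  -- conclude
  have hblim : Tendsto (fun n : ℕ => f b - f a + 2*(L:ℝ)*(1/((n:ℝ)+1))) atTop (𝓝 (f b - f a)) := by
    have h0 : Tendsto (fun n : ℕ => 1/((n:ℝ)+1)) atTop (𝓝 0) :=
      tendsto_one_div_add_atTop_nhds_zero_nat
    have h1 : Tendsto (fun _ : ℕ => 2*(L:ℝ)) atTop (𝓝 (2*(L:ℝ))) := tendsto_const_nhds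
    have h2 : Tendsto (fun _ : ℕ => f b - f a) atTop (𝓝 (f b - f a)) := tendsto_const_nhds
    have := h2.add (h1.mul h0)
    simpa using this
  exact le_of_tendsto_of_tendsto' htendsto hblim hbound

lemma clamp_lipschitz (S : ℝ) : LipschitzWith 1 (fun x : ℝ => max 0 (min x S)) := by
  apply LipschitzWith.of_dist_le_mul
  intro x y
  rw [Real.dist_eq, Real.dist_eq, NNReal.coe_one, one_mul]
  calc |max 0 (min x S) - max 0 (min y S)| = |max (min x S) 0 - max (min y S) 0| := by
        rw [max_comm, max_comm (min y S)]
    _ ≤ |min x S - min y S| := abs_max_sub_max_le_abs _ _ _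
    _ ≤ max |x - y| |S - S| := abs_min_sub_min_le_max _ _ _ _
    _ = |x - y| := by simp

lemma clamp_mem {S : ℝ} (hS : 0 ≤ S) (x : ℝ) : max 0 (min x S) ∈ Icc (0:ℝ) S :=
  ⟨le_max_left _ _, max_le hS (min_le_right _ _)⟩

lemma clamp_of_mem {S x : ℝ} (hx : x ∈ Icc (0:ℝ) S) : max 0 (min x S) = x := by
  rw [min_eq_left hx.2, max_eq_right hx.1]

/-- A function of bounded variation on `[0,S]` agrees there with a measurable function. -/
lemma bv_exists_measurable {d : ℕ} {f : ℝ → Euc d} {S : ℝ} (hS : 0 ≤ S)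
    (hf : BoundedVariationOn f (Icc 0 S)) :
    ∃ m : ℝ → Euc d, Measurable m ∧ EqOn f m (Icc 0 S) := by
  have hcoord : ∀ i : Fin d, ∃ g : ℝ → ℝ, Measurable g ∧ ∀ x ∈ Icc (0:ℝ) S, f x i = g x := by
    intro i
    have hproj : LipschitzWith 1 (fun z : Euc d => z i) := by
      apply LipschitzWith.of_dist_le_mul
      intro x y
      rw [NNReal.coe_one, one_mul, EuclideanSpace.dist_eq]
      have h1 : dist (x i) (y i) = Real.sqrt (dist (x i) (y i) ^ 2) :=
        (Real.sqrt_sq dist_nonneg).symm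
      rw [h1]
      apply Real.sqrt_le_sqrt
      exact Finset.single_le_sum (f := fun j => dist (x j) (y j) ^ 2)
        (fun j _ => sq_nonneg _) (Finset.mem_univ i)
    have hbv : BoundedVariationOn (fun x => f x i) (Icc 0 S) :=
      hproj.comp_boundedVariationOn hf
    obtain ⟨p, q, hp, hq, hpq⟩ := hbv.locallyBoundedVariationOn.exists_monotoneOn_sub_monotoneOn
    have hpm : Monotone (fun x => p (max 0 (min x S))) := fun x y hxy =>
      hp (clamp_mem hS x) (clamp_mem hS y)
        (max_le_max le_rfl (min_le_min hxy le_rfl))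
    have hqm : Monotone (fun x => q (max 0 (min x S))) := fun x y hxy =>
      hq (clamp_mem hS x) (clamp_mem hS y)
        (max_le_max le_rfl (min_le_min hxy le_rfl))
    refine ⟨fun x => p (max 0 (min x S)) - q (max 0 (min x S)),
      hpm.measurable.sub hqm.measurable, fun x hx => ?_⟩
    show f x i = p (max 0 (min x S)) - q (max 0 (min x S))
    rw [clamp_of_mem hx]
    have := congrFun hpq x
    simpa using this
  choose g hgm hgeq using hcoord
  refine ⟨fun s => (WithLp.equiv 2 (Fin d → ℝ)).symm (fun i => g i s),
    (PiLp.continuous_toLp 2 (fun _ : Fin d => ℝ)).measurable.comp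
      (measurable_pi_lambda _ hgm), fun x hx => ?_⟩
  ext i
  simp only [WithLp.equiv_symm_apply, PiLp.toLp_apply]
  exact hgeq i x hx

/-- A priori bounds (Step 1 of the proof of Theorem 3.4): `‖ẑ'‖ ≤ 1/c` a.e. and
`S ≤ T + E(z₀) + (1/c)·∫₀^S ‖ℓ̂‖`. -/
theorem a_priori_bounds {d : ℕ}
    (R : Euc d → ℝ) (c C : ℝ) (hR : StdDissipation R c C)
    (A : Euc d →L[ℝ] Euc d) (hAsymm : ∀ x y : Euc d, ⟪A x, y⟫ = ⟪x, A y⟫)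
    (hApos : ∀ z : Euc d, z ≠ 0 → 0 < ⟪A z, z⟫)
    (F : Euc d → ℝ) (hF : ContDiff ℝ 2 F) (hFnonneg : ∀ z, 0 ≤ F z)
    (T : ℝ) (hT : 0 < T) (z₀ : Euc d)
    (S : ℝ) (hS : 0 < S) (that : ℝ → ℝ) (zhat lhat : ℝ → Euc d)
    (t' : ℝ → ℝ) (z' : ℝ → Euc d)
    (hLipt : ∃ L : ℝ≥0, LipschitzOnWith L that (Icc 0 S))
    (hLipz : ∃ L : ℝ≥0, LipschitzOnWith L zhat (Icc 0 S))
    (hlhatBV : BoundedVariationOn lhat (Icc 0 S))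
    (hconds : SatisfiesConds R A F T z₀ S that zhat lhat t' z') :
    (∀ᵐ s ∂(volume.restrict (Ioo 0 S)), ‖z' s‖ ≤ 1 / c) ∧
      S ≤ T + En A F z₀ + (1 / c) * ∫ s in (0:ℝ)..S, ‖lhat s‖ := by
  obtain ⟨hconv, hhom, hc, hcC, hlow, hup⟩ := hR
  set μ := volume.restrict (Ioo (0:ℝ) S) with hμdef
  have hμfin : IsFiniteMeasure μ := by
    constructor
    rw [hμdef, Measure.restrict_apply_univ, Real.volume_Ioo]
    exact ENNReal.ofReal_lt_top
  have hddnn : ∀ s, (0:ℝ) ≤ distR R (-(DzI A F lhat s (zhat s))) :=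
    fun s => Metric.infDist_nonneg
  -- Part 1
  have part1 : ∀ᵐ s ∂μ, ‖z' s‖ ≤ 1 / c := by
    filter_upwards [hconds.c22, hconds.c23] with s h22 h23
    have h1 : c * ‖z' s‖ ≤ R (z' s) := hlow _
    have h2 : 0 ≤ ‖z' s‖ * distR R (-(DzI A F lhat s (zhat s))) :=
      mul_nonneg (norm_nonneg _) (hddnn s)
    rw [le_div_iff₀ hc]
    nlinarith [h22.1]
  refine ⟨part1, ?_⟩
  -- measurability of t', z'
  have ht'ae : t' =ᵐ[μ] deriv that := hconds.deriv_t.mono fun s hs => hs.deriv.symm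
  have hz'ae : z' =ᵐ[μ] deriv zhat := hconds.deriv_z.mono fun s hs => hs.deriv.symm
  set g : ℝ → ℝ :=
    fun s => R (z' s) + ‖z' s‖ * distR R (-(DzI A F lhat s (zhat s))) with hgdef
  have hgnn : ∀ s, 0 ≤ g s := fun s =>
    add_nonneg ((mul_nonneg hc.le (norm_nonneg _)).trans (hlow _))
      (mul_nonneg (norm_nonneg _) (hddnn s))
  have ht'bd : ∀ᵐ s ∂μ, ‖t' s‖ ≤ (1:ℝ) := by
    filter_upwards [hconds.c22, hconds.c23] with s h22 h23
    rw [Real.norm_eq_abs, abs_le]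
    have := hgnn s
    simp only [hgdef] at this
    constructor <;> linarith [h22.1]
  have ht'int : Integrable t' μ :=
    Integrable.mono' (integrable_const 1)
      ((measurable_deriv that).aestronglyMeasurable.congr ht'ae.symm) ht'bd
  have hgae : g =ᵐ[μ] fun s => 1 - t' s := by
    filter_upwards [hconds.c23] with s h23
    simp only [hgdef]; linarith
  have hgint : Integrable g μ := ((integrable_const 1).sub ht'int).congr hgae.symm
  have hsum : ∫ s, t' s ∂μ + ∫ s, g s ∂μ = S := by
    rw [← integral_add ht'int hgint]
    have hone : (fun s => t' s + g s) =ᵐ[μ] fun _ => (1:ℝ) := by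
      filter_upwards [hconds.c23] with s h23
      simp only [hgdef]; linarith
    rw [integral_congr_ae hone, integral_const, smul_eq_mul, mul_one, hμdef,
      Measure.real_def, Measure.restrict_apply_univ, Real.volume_Ioo, sub_zero, ENNReal.toReal_ofReal hS.le]
  -- bound ∫ t' by T
  have hTpart : ∫ s, t' s ∂μ ≤ T := by
    obtain ⟨L, hL⟩ := hLipt
    set ft : ℝ → ℝ := fun x => that (max 0 (min x S)) with hft
    have hftlip : LipschitzWith L ft := by
      apply LipschitzWith.of_dist_le_mul
      intro x y
      calc dist (ft x) (ft y) ≤ (L:ℝ) * dist (max 0 (min x S)) (max 0 (min y S)) :=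
            hL.dist_le_mul _ (clamp_mem hS.le x) _ (clamp_mem hS.le y)
        _ ≤ (L:ℝ) * dist x y := by
            have := (clamp_lipschitz S).dist_le_mul x y
            rw [NNReal.coe_one, one_mul] at this
            exact mul_le_mul_of_nonneg_left this L.2
    have hder : ∀ᵐ s ∂μ, HasDerivAt ft (t' s) s := by
      filter_upwards [hconds.deriv_t, ae_restrict_mem measurableSet_Ioo] with s hs hmem
      apply hs.congr_of_eventuallyEq
      filter_upwards [isOpen_Ioo.eventually_mem hmem] with x hx
      rw [hft]; dsimp only
      rw [clamp_of_mem (Ioo_subset_Icc_self hx)]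
    have := lipschitz_integral_deriv_le hftlip hS.le hder
    have hftS : ft S = T := by
      rw [hft]; dsimp only
      rw [clamp_of_mem (right_mem_Icc.2 hS.le), hconds.t_final]
    have hft0 : ft 0 = 0 := by
      rw [hft]; dsimp only
      rw [clamp_of_mem (left_mem_Icc.2 hS.le), hconds.t_init]
    rw [hftS, hft0, sub_zero] at this
    exact this
  -- energy nonneg
  have hquad : ∀ w : Euc d, (0:ℝ) ≤ ⟪A w, w⟫ := by
    intro w
    rcases eq_or_ne w 0 with h | h
    · simp [h]
    · exact (hApos w h).le
  have hEnn : ∀ w, 0 ≤ En A F w := fun w =>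
    add_nonneg (mul_nonneg (by norm_num) (hquad w)) (hFnonneg w)
  -- measurable representative of lhat
  obtain ⟨m, hm, hmeq⟩ := bv_exists_measurable hS.le hlhatBV
  have hlhat_ae : ∀ᵐ s ∂μ, lhat s = m s := by
    rw [hμdef]
    exact (ae_restrict_iff' measurableSet_Ioo).2
      (ae_of_all _ fun s hs => hmeq (Ioo_subset_Icc_self hs))
  set B : ℝ := ‖lhat 0‖ + (eVariationOn lhat (Icc 0 S)).toReal with hBdef
  have hBnn : 0 ≤ B := add_nonneg (norm_nonneg _) ENNReal.toReal_nonneg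
  have hBbd : ∀ s ∈ Icc (0:ℝ) S, ‖lhat s‖ ≤ B := by
    intro s hs
    have h1 := hlhatBV.dist_le hs (left_mem_Icc.2 hS.le)
    rw [dist_eq_norm] at h1
    calc ‖lhat s‖ = ‖lhat 0 + (lhat s - lhat 0)‖ := by rw [add_sub_cancel]
      _ ≤ ‖lhat 0‖ + ‖lhat s - lhat 0‖ := norm_add_le _ _
      _ ≤ B := by rw [hBdef]; linarith
  have hBbd' : ∀ᵐ s ∂μ, ‖lhat s‖ ≤ B := by
    rw [hμdef]
    exact (ae_restrict_iff' measurableSet_Ioo).2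
      (ae_of_all _ fun s hs => hBbd s (Ioo_subset_Icc_self hs))
  -- integrability of the inner product and of ‖lhat‖
  have hinner_meas : AEStronglyMeasurable (fun r => ⟪lhat r, z' r⟫) μ := by
    apply ((hm.inner (measurable_deriv zhat)).aestronglyMeasurable).congr
    filter_upwards [hlhat_ae, hz'ae] with s h1 h2
    rw [h1, h2]
  have hinner_bd : ∀ᵐ r ∂μ, ‖⟪lhat r, z' r⟫‖ ≤ B * (1/c) := by
    filter_upwards [part1, hBbd'] with r h1 h2
    rw [Real.norm_eq_abs]
    calc |⟪lhat r, z' r⟫| ≤ ‖lhat r‖ * ‖z' r‖ := abs_real_inner_le_norm _ _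
      _ ≤ B * (1/c) := mul_le_mul h2 h1 (norm_nonneg _) hBnn
  have hinner_int : Integrable (fun r => ⟪lhat r, z' r⟫) μ :=
    Integrable.mono' (integrable_const _) hinner_meas hinner_bd
  have hnorm_meas : AEStronglyMeasurable (fun r => ‖lhat r‖) μ := by
    apply hm.norm.aestronglyMeasurable.congr
    filter_upwards [hlhat_ae] with s h1
    rw [h1]
  have hnorm_int : Integrable (fun r => ‖lhat r‖) μ := by
    apply Integrable.mono' (integrable_const B) hnorm_meas
    filter_upwards [hBbd'] with s h1
    rwa [norm_norm]
  -- bound the work term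
  have hmono : ∫ r, ⟪lhat r, z' r⟫ ∂μ ≤ ∫ r, (1/c) * ‖lhat r‖ ∂μ := by
    apply integral_mono_ae hinner_int (hnorm_int.const_mul _)
    filter_upwards [part1] with r h1
    calc ⟪lhat r, z' r⟫ ≤ ‖lhat r‖ * ‖z' r‖ := real_inner_le_norm _ _
      _ ≤ ‖lhat r‖ * (1/c) := mul_le_mul_of_nonneg_left h1 (norm_nonneg _)
      _ = (1/c) * ‖lhat r‖ := mul_comm _ _
  -- interval integrals vs μ-integrals
  have hiv : ∀ f : ℝ → ℝ, (∫ r in (0:ℝ)..S, f r) = ∫ r, f r ∂μ := by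
    intro f
    rw [intervalIntegral.integral_of_le hS.le, hμdef,
      MeasureTheory.integral_Ioc_eq_integral_Ioo]
  -- energy balance (2.4) on [0, S]
  have h24 := hconds.c24 0 S le_rfl hS.le le_rfl
  rw [hconds.z_init, hiv, hiv] at h24
  have hgval : ∫ r, g r ∂μ ≤ En A F z₀ + (1/c) * ∫ r, ‖lhat r‖ ∂μ := by
    have h1 : ∫ r, g r ∂μ = En A F z₀ - En A F (zhat S) + ∫ r, ⟪lhat r, z' r⟫ ∂μ := by
      simp only [hgdef]; linarith
    rw [h1, ← integral_const_mul]
    have := hEnn (zhat S)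
    linarith
  rw [hiv]
  linarith


end
end

section
/- Let S > 0 and for each n ∈ ℕ let t̂_n : [0,S] → ℝ be absolutely continuous and nondecreasing, and suppose t̂_n → t̂ uniformly on [0,S]. Define M_n := {s ∈ (0,S) : t̂_n(s₁) < t̂_n(s₂) whenever 0 ≤ s₁ < s < s₂ ≤ S} and M := {s ∈ (0,S) : t̂(s₁) < t̂(s₂) whenever 0 ≤ s₁ < s < s₂ ≤ S}. Then for every s* ∈ M and every ε > 0 there exists n̄ ∈ ℕ such that for all n ≥ n̄ the set M_n ∩ (s* − ε, s* + ε) has positive Lebesgue measure. (Claim (3.8) in the proof of Theorem 3.4) -/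
open MeasureTheory Set Filter
open scoped Topology

open Metric

noncomputable section

lemma key (S : ℝ) (g : ℝ → ℝ) (hint : IntervalIntegrable g volume 0 S)
    (f : ℝ → ℝ) (hAC : ∀ t ∈ Icc (0:ℝ) S, f t = f 0 + ∫ r in (0:ℝ)..t, g r)
    (hmono : MonotoneOn f (Icc 0 S))
    (a b : ℝ) (ha : 0 < a) (hab : a < b) (hbS : b < S) (hfab : f a < f b) :
    0 < volume (Mset S f ∩ Ioo a b) := by
  have hS : (0:ℝ) ≤ S := le_of_lt (lt_trans (lt_trans ha hab) hbS)
  by_contra hcon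
  push_neg at hcon
  have hzero : volume (Mset S f ∩ Ioo a b) = 0 := le_antisymm hcon zero_le
  set G : ℝ → ℝ := (Ioo 0 S).indicator g with hGdef
  have hIoc : IntegrableOn g (Set.Ioc 0 S) volume := by
    simpa [Set.uIoc_of_le hS] using hint.1
  have hGint : Integrable G volume :=
    (hIoc.mono_set Ioo_subset_Ioc_self).integrable_indicator measurableSet_Ioo
  have hGloc : LocallyIntegrable G volume := hGint.locallyIntegrable
  have hsub : ∀ u v : ℝ, 0 ≤ u → u ≤ v → v ≤ S → IntervalIntegrable g volume u v := by
    intro u v hu huv hv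
    refine hint.mono_set ?_
    rw [Set.uIcc_of_le hS, Set.uIcc_of_le huv]
    exact Set.Icc_subset_Icc hu hv
  have hdiff : ∀ u v : ℝ, 0 ≤ u → u ≤ v → v ≤ S → f v - f u = ∫ r in u..v, g r := by
    intro u v hu huv hv
    rw [hAC u ⟨hu, le_trans huv hv⟩, hAC v ⟨le_trans hu huv, hv⟩]
    have h2 : IntervalIntegrable g volume 0 v := hsub 0 v le_rfl (le_trans hu huv) hv
    have h1 : IntervalIntegrable g volume 0 u := hsub 0 u le_rfl hu (le_trans huv hv)
    have h3 := intervalIntegral.integral_interval_sub_left h2 h1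
    linarith
  -- a.e. point of (a,b) off Mset has g x = 0
  have hae : ∀ᵐ x ∂volume, x ∈ Ioo a b → x ∉ Mset S f → g x = 0 := by
    filter_upwards [IsUnifLocDoublingMeasure.ae_tendsto_average (μ := volume) hGloc 1]
      with x hx hxab hxM
    have hx0S : x ∈ Ioo 0 S := ⟨lt_trans ha hxab.1, lt_trans hxab.2 hbS⟩
    simp only [Mset, Set.mem_setOf_eq, hx0S, true_and, not_forall] at hxM
    obtain ⟨s₁, hs₁, s₂, hs₂, h1x, hx2, hns⟩ := hxM
    push_neg at hns
    have hconst : ∀ t ∈ Icc s₁ s₂, f t = f s₁ := by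
      intro t ht
      have hts : t ∈ Icc (0:ℝ) S := ⟨le_trans hs₁.1 ht.1, le_trans ht.2 hs₂.2⟩
      have h1 := hmono hs₁ hts ht.1
      have h2 := hmono hts hs₂ ht.2
      linarith
    set r₀ : ℝ := min (min (x - s₁) (s₂ - x)) (min x (S - x)) with hr₀
    have hr₀pos : 0 < r₀ := by
      simp only [hr₀, lt_min_iff]
      exact ⟨⟨by linarith, by linarith⟩, hx0S.1, by linarith [hx0S.2]⟩
    -- the average over small balls is 0
    have havg : ∀ᶠ r in 𝓝[>] (0:ℝ), (⨍ y in closedBall x r, G y ∂volume) = 0 := by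
      filter_upwards [Ioo_mem_nhdsGT_of_mem (Set.left_mem_Ico.mpr hr₀pos)] with r hr
      obtain ⟨hrpos, hrlt⟩ := hr
      have hA : r < x - s₁ := lt_of_lt_of_le hrlt ((min_le_left _ _).trans (min_le_left _ _))
      have hB : r < s₂ - x := lt_of_lt_of_le hrlt ((min_le_left _ _).trans (min_le_right _ _))
      have hC : r < x := lt_of_lt_of_le hrlt ((min_le_right _ _).trans (min_le_left _ _))
      have hD : r < S - x := lt_of_lt_of_le hrlt ((min_le_right _ _).trans (min_le_right _ _))
      have hball : closedBall x r ⊆ Set.Ioo 0 S := by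
        rw [Real.closedBall_eq_Icc]
        exact fun y hy => ⟨by linarith [hy.1], by linarith [hy.2]⟩
      have hInt : ∫ y in closedBall x r, G y ∂volume = f (x + r) - f (x - r) := by
        have h1 : ∫ y in closedBall x r, G y ∂volume = ∫ y in closedBall x r, g y ∂volume :=
          setIntegral_congr_fun measurableSet_closedBall
            (fun y hy => Set.indicator_of_mem (hball hy) g)
        rw [h1, Real.closedBall_eq_Icc, MeasureTheory.integral_Icc_eq_integral_Ioc,
          ← intervalIntegral.integral_of_le (by linarith)]
        exact (hdiff (x - r) (x + r) (by linarith [hs₁.1]) (by linarith) (by linarith [hs₂.2])).symm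
      have hfr : f (x + r) = f (x - r) := by
        rw [hconst (x + r) ⟨by linarith, by linarith⟩, hconst (x - r) ⟨by linarith, by linarith⟩]
      rw [setAverage_eq, hInt, hfr, sub_self, smul_zero]
    -- conclude G x = 0 from the Lebesgue differentiation theorem
    have htend : Tendsto (fun r : ℝ => ⨍ y in closedBall x r, G y ∂volume) (𝓝[>] 0) (𝓝 (G x)) := by
      refine hx (fun _ => x) id tendsto_id ?_
      filter_upwards [self_mem_nhdsWithin] with r hr
      simp only [mem_closedBall, dist_self, one_mul]
      exact le_of_lt hr
    have havg' : (fun r : ℝ => ⨍ y in closedBall x r, G y ∂volume)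
        =ᶠ[𝓝[>] (0:ℝ)] fun _ => (0:ℝ) := havg
    have htend0 : Tendsto (fun r : ℝ => ⨍ y in closedBall x r, G y ∂volume) (𝓝[>] 0)
        (𝓝 0) := Filter.Tendsto.congr' havg'.symm tendsto_const_nhds
    have : G x = 0 := tendsto_nhds_unique htend htend0
    rwa [hGdef, Set.indicator_of_mem hx0S] at this
  -- combine with the nullity of Mset ∩ (a,b)
  have hae2 : ∀ᵐ x ∂volume, x ∉ Mset S f ∩ Ioo a b :=
    measure_eq_zero_iff_ae_notMem.mp hzero
  have hgz : ∀ᵐ x ∂volume, x ∈ Ioo a b → g x = 0 := by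
    filter_upwards [hae, hae2] with x h1 h2 hx
    by_cases hM : x ∈ Mset S f
    · exact absurd ⟨hM, hx⟩ h2
    · exact h1 hx hM
  have hint_ab : f b - f a = ∫ r in a..b, g r :=
    hdiff a b (le_of_lt ha) (le_of_lt hab) (le_of_lt hbS)
  have : ∫ r in a..b, g r = 0 := by
    rw [intervalIntegral.integral_of_le (le_of_lt hab),
      MeasureTheory.integral_Ioc_eq_integral_Ioo]
    exact setIntegral_eq_zero_of_ae_eq_zero hgz
  linarith [hint_ab, this, hfab]


/-- Claim (3.8) in the proof of Theorem 3.4: near every point of `M`, the sets `M_n`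
eventually have positive measure. -/
theorem claim_3_8 (S : ℝ) (hS : 0 < S)
    (thatn : ℕ → ℝ → ℝ) (gn : ℕ → ℝ → ℝ)
    (hint : ∀ n, IntervalIntegrable (gn n) volume 0 S)
    (hAC : ∀ n, ∀ t ∈ Icc (0 : ℝ) S, thatn n t = thatn n 0 + ∫ r in (0:ℝ)..t, gn n r)
    (hmono : ∀ n, MonotoneOn (thatn n) (Icc 0 S))
    (that : ℝ → ℝ)
    (hconv : TendstoUniformlyOn (fun n => thatn n) that atTop (Icc 0 S)) :
    ∀ sstar ∈ Mset S that, ∀ ε > 0, ∃ N : ℕ, ∀ n ≥ N,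
      0 < volume (Mset S (thatn n) ∩ Ioo (sstar - ε) (sstar + ε)) := by
  rintro sstar ⟨hs0, hsinc⟩ ε hε
  obtain ⟨hs0', hsS⟩ := hs0
  set a : ℝ := max (sstar - ε/2) (sstar/2) with hadef
  set b : ℝ := min (sstar + ε/2) ((sstar + S)/2) with hbdef
  have ha0 : 0 < a := lt_max_of_lt_right (by linarith)
  have haslt : a < sstar := max_lt (by linarith) (by linarith)
  have hsltb : sstar < b := lt_min (by linarith) (by linarith)
  have hbS : b < S := min_lt_of_right_lt (by linarith)
  have haε : sstar - ε < a := lt_max_of_lt_left (by linarith)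
  have hbε : b < sstar + ε := min_lt_of_left_lt (by linarith)
  have haIcc : a ∈ Icc (0:ℝ) S := ⟨le_of_lt ha0, by linarith⟩
  have hbIcc : b ∈ Icc (0:ℝ) S := ⟨by linarith, le_of_lt hbS⟩
  have hδ : 0 < that b - that a := sub_pos.mpr (hsinc a haIcc b hbIcc haslt hsltb)
  set δ : ℝ := that b - that a with hδdef
  obtain ⟨N, hN⟩ := eventually_atTop.mp
    (Metric.tendstoUniformlyOn_iff.mp hconv (δ/4) (by positivity))
  refine ⟨N, fun n hn => ?_⟩
  have hda := hN n hn a haIcc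
  have hdb := hN n hn b hbIcc
  rw [Real.dist_eq, abs_lt] at hda hdb
  have hfab : thatn n a < thatn n b := by linarith [hda.1, hda.2, hdb.1, hdb.2]
  have hkey := key S (gn n) (hint n) (thatn n) (hAC n) (hmono n) a b ha0
    (lt_trans haslt hsltb) hbS hfab
  refine lt_of_lt_of_le hkey (measure_mono (Set.inter_subset_inter_right _ ?_))
  exact Set.Ioo_subset_Ioo (le_of_lt haε) (le_of_lt hbε)

end
end
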